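/- Let E be a real inner product space and f : E → ℝ a differentiable function with L-Lipschitz gradient (‖∇f(x) − ∇f(y)‖ ≤ L‖x − y‖ for all x, y) that attains its minimum value f* and satisfies the Polyak–Łojasiewicz condition with constant μ, where 0 < μ ≤ L: f(x) − f* ≤ (1/(2μ))‖∇f(x)‖² for all x ∈ E. Define the gradient-descent sequence x^{k+1} = x^k − (1/L)∇f(x^k) from an arbitrary x⁰ ∈ E. Then for every N: f(x^N) − f* ≤ (1 − μ/L)^N (f(x⁰) − f*) ≤ exp(−μN/L)(f(x⁰) − f*). -/

import Mathlib

open scoped RealInnerProductSpace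

lemma descent_lemma
    {E : Type*} [NormedAddCommGroup E] [InnerProductSpace ℝ E] [CompleteSpace E]
    (f : E → ℝ) (f' : E → E) (hdiff : ∀ x, HasGradientAt f (f' x) x)
    (L : ℝ) (hL : 0 < L)
    (hLip : ∀ x y, ‖f' x - f' y‖ ≤ L * ‖x - y‖) (x y : E) :
    f y ≤ f x + ⟪f' x, y - x⟫ + L / 2 * ‖y - x‖ ^ 2 := by
  set d := y - x with hd
  set φ : ℝ → ℝ := fun t => f (x + t • d) - t * ⟪f' x, d⟫ - L / 2 * ‖d‖ ^ 2 * t ^ 2 with hφ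
  have hder : ∀ t : ℝ, HasDerivAt φ
      (⟪f' (x + t • d), d⟫ - ⟪f' x, d⟫ - L * ‖d‖ ^ 2 * t) t := by
    intro t
    have hγ : HasDerivAt (fun t : ℝ => x + t • d) d t := by
      simpa using ((hasDerivAt_id t).smul_const d).const_add x
    have h1 : HasDerivAt (fun t : ℝ => f (x + t • d)) ⟪f' (x + t • d), d⟫ t := by
      have := ((hdiff (x + t • d)).hasFDerivAt).comp_hasDerivAt t hγ
      simp [InnerProductSpace.toDual_apply_apply, Function.comp_def] at this
      exact this
    have h2 : HasDerivAt (fun t : ℝ => t * ⟪f' x, d⟫) ⟪f' x, d⟫ t := by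
      simpa using (hasDerivAt_id t).mul_const (⟪f' x, d⟫)
    have h3 : HasDerivAt (fun t : ℝ => L / 2 * ‖d‖ ^ 2 * t ^ 2)
        (L * ‖d‖ ^ 2 * t) t := by
      have := (hasDerivAt_pow 2 t).const_mul (L / 2 * ‖d‖ ^ 2)
      exact this.congr_deriv (by norm_num; ring)
    exact (h1.sub h2).sub h3
  have hmono : AntitoneOn φ (Set.Icc (0:ℝ) 1) := by
    apply antitoneOn_of_deriv_nonpos (convex_Icc 0 1)
    · exact fun t _ => (hder t).continuousAt.continuousWithinAt
    · intro t _
      exact (hder t).differentiableAt.differentiableWithinAt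
    · intro t ht
      rw [interior_Icc] at ht
      rw [(hder t).deriv]
      have key : ⟪f' (x + t • d) - f' x, d⟫ ≤ L * ‖d‖ ^ 2 * t := by
        calc ⟪f' (x + t • d) - f' x, d⟫ ≤ ‖f' (x + t • d) - f' x‖ * ‖d‖ :=
              real_inner_le_norm _ _
          _ ≤ (L * ‖(x + t • d) - x‖) * ‖d‖ := by
              gcongr; exact hLip _ _
          _ = L * ‖d‖ ^ 2 * t := by
              have : ‖(x + t • d) - x‖ = t * ‖d‖ := by
                simp [norm_smul, abs_of_pos ht.1]
              rw [this]; ring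
      rw [inner_sub_left] at key
      linarith
  have h01 := hmono (Set.left_mem_Icc.2 zero_le_one) (Set.right_mem_Icc.2 zero_le_one)
      zero_le_one
  simp only [hφ] at h01
  simp only [zero_smul, add_zero, one_smul, mul_one, one_pow, mul_zero, zero_mul,
    ne_eq, OfNat.ofNat_ne_zero, not_false_eq_true, zero_pow, sub_zero] at h01
  have hxy : x + d = y := by rw [hd]; abel
  rw [hxy] at h01
  linarith

/-- Linear convergence of gradient descent with constant step `1/L` for an
`L`-smooth function satisfying the Polyak–Łojasiewicz condition. -/
theorem gradient_descent_PL_linear_convergence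
    {E : Type*} [NormedAddCommGroup E] [InnerProductSpace ℝ E] [CompleteSpace E]
    (f : E → ℝ) (f' : E → E) (hdiff : ∀ x, HasGradientAt f (f' x) x)
    (L μ : ℝ) (hμ : 0 < μ) (hμL : μ ≤ L)
    (hLip : ∀ x y, ‖f' x - f' y‖ ≤ L * ‖x - y‖)
    (fstar : ℝ) (hmin : ∃ xs, f xs = fstar) (hlb : ∀ x, fstar ≤ f x)
    (hPL : ∀ x, f x - fstar ≤ 1 / (2 * μ) * ‖f' x‖ ^ 2)
    (x : ℕ → E) (hstep : ∀ k, x (k + 1) = x k - (1 / L) • f' (x k)) :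
    ∀ N : ℕ,
      f (x N) - fstar ≤ (1 - μ / L) ^ N * (f (x 0) - fstar) ∧
      (1 - μ / L) ^ N * (f (x 0) - fstar) ≤
        Real.exp (-(μ / L) * N) * (f (x 0) - fstar) := by
  have hL : 0 < L := lt_of_lt_of_le hμ hμL
  have hrat0 : (0:ℝ) ≤ 1 - μ / L := by
    have : μ / L ≤ 1 := (div_le_one hL).2 hμL
    linarith
  -- one-step contraction
  have hone : ∀ k, f (x (k + 1)) - fstar ≤ (1 - μ / L) * (f (x k) - fstar) := by
    intro k
    have hdesc := descent_lemma f f' hdiff L hL hLip (x k) (x (k + 1))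
    have hsub : x (k + 1) - x k = -((1 / L) • f' (x k)) := by
      rw [hstep k]; abel
    have hinner : ⟪f' (x k), x (k + 1) - x k⟫ = -(1 / L * ‖f' (x k)‖ ^ 2) := by
      rw [hsub, inner_neg_right, real_inner_smul_right, real_inner_self_eq_norm_sq]
    have hnorm : ‖x (k + 1) - x k‖ ^ 2 = (1 / L) ^ 2 * ‖f' (x k)‖ ^ 2 := by
      rw [hsub, norm_neg, norm_smul, mul_pow]
      congr 1
      rw [Real.norm_eq_abs, sq_abs]
    have hdesc2 : f (x (k + 1)) ≤ f (x k) - 1 / (2 * L) * ‖f' (x k)‖ ^ 2 := by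
      rw [hinner, hnorm] at hdesc
      have : L / 2 * ((1 / L) ^ 2 * ‖f' (x k)‖ ^ 2) = 1 / (2 * L) * ‖f' (x k)‖ ^ 2 := by
        field_simp
      rw [this] at hdesc
      have h12 : 1 / L * ‖f' (x k)‖ ^ 2 - 1 / (2 * L) * ‖f' (x k)‖ ^ 2
          = 1 / (2 * L) * ‖f' (x k)‖ ^ 2 := by
        field_simp; ring
      linarith
    have hPL' : 2 * μ * (f (x k) - fstar) ≤ ‖f' (x k)‖ ^ 2 := by
      have := hPL (x k)
      have h2μ : (0:ℝ) < 2 * μ := by linarith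
      rw [div_mul_eq_mul_div, le_div_iff₀ h2μ, one_mul] at this
      linarith [this]
    have : 1 / (2 * L) * (2 * μ * (f (x k) - fstar)) ≤ 1 / (2 * L) * ‖f' (x k)‖ ^ 2 := by
      gcongr
    have heq : 1 / (2 * L) * (2 * μ * (f (x k) - fstar)) = μ / L * (f (x k) - fstar) := by
      field_simp
    rw [heq] at this
    linarith
  intro N
  have hgeo : f (x N) - fstar ≤ (1 - μ / L) ^ N * (f (x 0) - fstar) := by
    induction N with
    | zero => simp
    | succ n ih =>
      calc f (x (n + 1)) - fstar ≤ (1 - μ / L) * (f (x n) - fstar) := hone n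
        _ ≤ (1 - μ / L) * ((1 - μ / L) ^ n * (f (x 0) - fstar)) := by gcongr
        _ = (1 - μ / L) ^ (n + 1) * (f (x 0) - fstar) := by ring
  refine ⟨hgeo, ?_⟩
  have hexp : (1 - μ / L) ^ N ≤ Real.exp (-(μ / L) * N) := by
    calc (1 - μ / L) ^ N ≤ (Real.exp (-(μ / L))) ^ N := by
          apply pow_le_pow_left₀ hrat0
          linarith [Real.add_one_le_exp (-(μ / L))]
      _ = Real.exp (-(μ / L) * N) := by
          rw [← Real.exp_nat_mul]; ring_nf
  have h0 : 0 ≤ f (x 0) - fstar := by linarith [hlb (x 0)]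
  gcongr
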